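/- Let G be a finite graph on n vertices whose every non-identity automorphism moves at least m vertices, and suppose 2^{m/2} ≥ |Aut G|. Then G has a distinguishing 2-colouring, i.e., a colouring c : V(G) → {0,1} such that the only automorphism φ with c ∘ φ = c is the identity. -/

import Mathlib

lemma fix_zpow {V : Type*} (π : Equiv.Perm V) (c : V → Bool)
    (hc : ∀ v, c (π v) = c v) : ∀ (i : ℤ) (x : V), c ((π ^ i) x) = c x := by
  have hinv : ∀ x, c (π⁻¹ x) = c x := by
    intro x
    conv_rhs => rw [← Equiv.apply_symm_apply π x]
    rw [hc]
    rfl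
  intro i
  induction i using Int.induction_on with
  | zero => simp
  | succ i ih =>
    intro x
    have : (π ^ ((i : ℤ) + 1)) x = (π ^ (i : ℤ)) (π x) := by
      rw [zpow_add_one, Equiv.Perm.mul_apply]
    rw [this, ih, hc]
  | pred i ih =>
    intro x
    have : (π ^ (-(i : ℤ) - 1)) x = (π ^ (-(i : ℤ))) (π⁻¹ x) := by
      rw [zpow_sub_one, Equiv.Perm.mul_apply]
    rw [this, ih, hinv]

lemma fix_sameCycle {V : Type*} (π : Equiv.Perm V) (c : V → Bool)
    (hc : ∀ v, c (π v) = c v) {x y : V} (h : π.SameCycle x y) : c x = c y := by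
  obtain ⟨i, hi⟩ := h
  rw [← hi, fix_zpow π c hc]

open Classical in
lemma fix_card_le {V : Type*} [Fintype V] (π : Equiv.Perm V) (m : ℕ)
    (hsupp : m ≤ π.support.card) :
    ((Finset.univ.filter fun c : V → Bool => ∀ v, c (π v) = c v).card : ℝ)
      ≤ 2 ^ (Fintype.card V) / 2 ^ ((m : ℝ) / 2) := by
  set s : Setoid V := ⟨π.SameCycle,
    ⟨fun x => Equiv.Perm.SameCycle.refl π x, fun h => h.symm, fun h1 h2 => h1.trans h2⟩⟩ with hs
  set q : V → Quotient s := Quotient.mk s with hq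
  have hqrel : ∀ v, π.SameCycle (q v).out v := fun v => Quotient.mk_out v
  have hqeq : ∀ {v w : V}, π.SameCycle v w → q v = q w := fun h => Quotient.sound h
  set T : Finset V := π.support.filter (fun v => (q v).out ≠ v) with hT
  set R : Finset V := π.support.filter (fun v => (q v).out = v) with hR
  set k : ℕ := (π.support.image q).card with hk
  -- R.card ≤ k
  have hRk : R.card ≤ k := by
    apply Finset.card_le_card_of_injOn q
    · intro v hv
      exact Finset.mem_image_of_mem q (Finset.mem_filter.mp hv).1
    · intro v hv w hw hvw
      have hv' := (Finset.mem_filter.mp hv).2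
      have hw' := (Finset.mem_filter.mp hw).2
      rw [← hv', ← hw', hvw]
  -- 2 * k ≤ support.card
  have h2k : 2 * k ≤ π.support.card := by
    rw [Finset.card_eq_sum_card_image q π.support]
    calc 2 * k = ∑ _x ∈ π.support.image q, 2 := by rw [Finset.sum_const, smul_eq_mul, mul_comm]
    _ ≤ ∑ x ∈ π.support.image q, (π.support.filter fun v => q v = x).card := by
        apply Finset.sum_le_sum
        intro x hx
        obtain ⟨v, hv, rfl⟩ := Finset.mem_image.mp hx
        have h1 : v ∈ π.support.filter fun w => q w = q v := by
          simp [Finset.mem_filter, hv]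
        have h2 : π v ∈ π.support.filter fun w => q w = q v := by
          refine Finset.mem_filter.mpr ⟨Equiv.Perm.apply_mem_support.mpr hv, ?_⟩
          exact hqeq ⟨-1, by simp⟩
        have hne : π v ≠ v := Equiv.Perm.mem_support.mp hv
        exact Finset.one_lt_card.mpr ⟨π v, h2, v, h1, hne⟩
  have hTR : T.card + R.card = π.support.card := by
    rw [hT, hR]
    have := Finset.card_filter_add_card_filter_not (s := π.support)
      (p := fun v => (q v).out ≠ v)
    simpa using this
  have hTm : m ≤ 2 * T.card := by omega
  have hfix : (Finset.univ.filter fun c : V → Bool => ∀ v, c (π v) = c v).card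
      ≤ 2 ^ (Fintype.card V - T.card) := by
    have hcard2 : (Finset.univ : Finset ({v : V // v ∉ T} → Bool)).card
        = 2 ^ (Fintype.card V - T.card) := by
      rw [Finset.card_univ, Fintype.card_fun, Fintype.card_bool]
      congr 1
      rw [Fintype.card_subtype_compl, Fintype.card_coe]
    rw [← hcard2]
    apply Finset.card_le_card_of_injOn (fun c (v : {v : V // v ∉ T}) => c v.val)
      (fun _ _ => Finset.mem_univ _)
    intro c hc c' hc' hcc'
    have hcfix := (Finset.mem_filter.mp hc).2
    have hcfix' := (Finset.mem_filter.mp hc').2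
    funext v
    by_cases hv : v ∈ T
    · have hout : (q v).out ∉ T := by
        have hqq : q ((q v).out) = q v := hqeq (hqrel v)
        simp only [hT, Finset.mem_filter, not_and, not_not]
        intro _
        rw [hqq]
      calc c v = c ((q v).out) := (fix_sameCycle π c hcfix (hqrel v)).symm
        _ = c' ((q v).out) := congrFun hcc' ⟨(q v).out, hout⟩
        _ = c' v := fix_sameCycle π c' hcfix' (hqrel v)
    · exact congrFun hcc' ⟨v, hv⟩
  have hTn : T.card ≤ Fintype.card V := by
    simpa using Finset.card_le_univ T
  have key : (2:ℝ) ^ ((m:ℝ)/2) ≤ (2:ℝ) ^ (T.card : ℕ) := by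
    rw [← Real.rpow_natCast 2 T.card]
    apply Real.rpow_le_rpow_of_exponent_le one_le_two
    have h2 : (m:ℝ) ≤ 2 * T.card := by exact_mod_cast hTm
    linarith
  calc ((Finset.univ.filter fun c : V → Bool => ∀ v, c (π v) = c v).card : ℝ)
      ≤ ((2 ^ (Fintype.card V - T.card) : ℕ) : ℝ) := by exact_mod_cast hfix
    _ = 2 ^ (Fintype.card V) / 2 ^ (T.card : ℕ) := by
        push_cast
        rw [pow_sub₀ (2:ℝ) two_ne_zero hTn, div_eq_mul_inv]
    _ ≤ 2 ^ (Fintype.card V) / 2 ^ ((m : ℝ) / 2) := by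
        apply div_le_div_of_nonneg_left _ _ key
        · positivity
        · positivity


open Classical in
/-- Russel–Sundaram: if every non-identity automorphism of a finite graph `G` moves at
least `m` vertices and `2^(m/2) ≥ |Aut G|`, then `G` has a distinguishing `2`-colouring. -/
theorem finite_motion_distinguishing {V : Type*} [Fintype V] (G : SimpleGraph V) (m : ℕ)
    (hm : ∀ φ : G ≃g G, (∀ v, φ v = v) ∨
      m ≤ (Finset.univ.filter fun v => φ v ≠ v).card)
    (hcard : (Nat.card (G ≃g G) : ℝ) ≤ 2 ^ ((m : ℝ) / 2)) :
    ∃ c : V → Bool, ∀ φ : G ≃g G, (∀ v, c (φ v) = c v) → ∀ v, φ v = v := by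
  by_contra hcon
  push_neg at hcon
  have hfin : Finite (G ≃g G) :=
    Finite.of_injective (fun φ : G ≃g G => (φ : V → V)) DFunLike.coe_injective
  have : Fintype (G ≃g G) := Fintype.ofFinite _
  set S : Finset (G ≃g G) := Finset.univ.filter (fun φ => ¬ ∀ v, φ v = v) with hSdef
  set F : (G ≃g G) → Finset (V → Bool) :=
    (fun φ => Finset.univ.filter fun c => ∀ v, c (φ v) = c v) with hFdef
  have hid : (RelIso.refl G.Adj) ∉ S := by simp [hSdef]
  have hScard : S.card < Nat.card (G ≃g G) := by
    rw [Nat.card_eq_fintype_card, ← Finset.card_univ]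
    apply Finset.card_lt_card
    rw [Finset.ssubset_univ_iff]
    intro h
    exact hid (h ▸ Finset.mem_univ _)
  have hcover : (Finset.univ : Finset (V → Bool)) ⊆ S.biUnion F := by
    intro c _
    obtain ⟨φ, hfix, v0, hv0⟩ := hcon c
    refine Finset.mem_biUnion.mpr ⟨φ, ?_, ?_⟩
    · simp only [hSdef, Finset.mem_filter, Finset.mem_univ, true_and]
      exact fun h => hv0 (h v0)
    · exact Finset.mem_filter.mpr ⟨Finset.mem_univ _, hfix⟩
  have hcount : (2 : ℕ) ^ (Fintype.card V) ≤ ∑ φ ∈ S, (F φ).card := by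
    calc (2:ℕ) ^ (Fintype.card V) = (Finset.univ : Finset (V → Bool)).card := by
          simp [Fintype.card_fun]
      _ ≤ (S.biUnion F).card := Finset.card_le_card hcover
      _ ≤ _ := Finset.card_biUnion_le
  set B : ℝ := 2 ^ (Fintype.card V) / 2 ^ ((m : ℝ) / 2) with hB
  have hBpos : 0 < B := by positivity
  have hterm : ∀ φ ∈ S, ((F φ).card : ℝ) ≤ B := by
    intro φ hφ
    have hnt : ¬ ∀ v, φ v = v := (Finset.mem_filter.mp hφ).2
    have hmφ := (hm φ).resolve_left hnt
    have hset : (Finset.univ.filter fun v => φ v ≠ v)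
        = Equiv.Perm.support (φ.toEquiv : Equiv.Perm V) := by
      ext v
      simp only [Finset.mem_filter, Finset.mem_univ, true_and, Equiv.Perm.mem_support]
      rfl
    have hsupp : m ≤ (Equiv.Perm.support (φ.toEquiv : Equiv.Perm V)).card :=
      le_trans hmφ (le_of_eq (by rw [hset]))
    have := fix_card_le (φ.toEquiv : Equiv.Perm V) m hsupp
    rw [hB, hFdef]
    convert this using 3
    rfl
  have hsum : ((2:ℝ) ^ (Fintype.card V)) ≤ S.card * B := by
    calc ((2:ℝ) ^ (Fintype.card V)) = ((2 ^ (Fintype.card V) : ℕ) : ℝ) := by push_cast; ring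
      _ ≤ ((∑ φ ∈ S, (F φ).card : ℕ) : ℝ) := by exact_mod_cast hcount
      _ = ∑ φ ∈ S, ((F φ).card : ℝ) := by push_cast; ring
      _ ≤ ∑ _φ ∈ S, B := Finset.sum_le_sum hterm
      _ = S.card * B := by rw [Finset.sum_const, nsmul_eq_mul]
  have hfinal : ((2:ℝ) ^ (Fintype.card V)) < 2 ^ (Fintype.card V) := by
    calc ((2:ℝ) ^ (Fintype.card V)) ≤ S.card * B := hsum
      _ < (Nat.card (G ≃g G) : ℝ) * B := by
          apply mul_lt_mul_of_pos_right _ hBpos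
          exact_mod_cast hScard
      _ ≤ 2 ^ ((m : ℝ) / 2) * B := mul_le_mul_of_nonneg_right hcard hBpos.le
      _ = 2 ^ (Fintype.card V) := by
          rw [hB, mul_div_cancel₀]
          positivity
  exact lt_irrefl _ hfinal
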